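/- The function f(x) = [((sin x/x)^2 + (tan x)/x − 2)/(x^3 tan x) − (8/45 − (8/945)x^2)]/x^4 is strictly increasing on (0, π/2). -/

import Mathlib

open Real

private lemma aux_nonneg {F f : ℝ → ℝ} (h0 : F 0 = 0) (hF : ∀ t, HasDerivAt F (f t) t)
    (hf : ∀ t, 0 ≤ t → 0 ≤ f t) {t : ℝ} (ht : 0 ≤ t) : 0 ≤ F t := by
  have mono : MonotoneOn F (Set.Ici 0) := by
    apply monotoneOn_of_deriv_nonneg (convex_Ici 0)
    · exact fun x _ => (hF x).continuousAt.continuousWithinAt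
    · exact fun x _ => (hF x).differentiableAt.differentiableWithinAt
    · intro x hx
      rw [(hF x).deriv]
      exact hf x (le_of_lt (by simpa using hx))
  have := mono Set.self_mem_Ici ht ht
  simpa [h0] using this

private lemma sin_ub_1 (t : ℝ) (ht : 0 ≤ t) : sin t ≤ t := by
  have h := aux_nonneg (F := fun u : ℝ => u - sin u) (f := fun u : ℝ => 1 - cos u)
    (by norm_num)
    (fun u => by exact (hasDerivAt_id u).sub (Real.hasDerivAt_sin u))
    (fun u _ => by show (0:ℝ) ≤ 1 - cos u; nlinarith [Real.cos_le_one u]) ht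
  have h' : (0:ℝ) ≤ t - sin t := h
  linarith

private lemma cos_lb_2 (t : ℝ) (ht : 0 ≤ t) : 1 - t^2/2 ≤ cos t := by
  have h := aux_nonneg (F := fun u : ℝ => cos u - (1 - u^2/2))
    (f := fun u : ℝ => (u) - sin u)
    (by norm_num)
    (fun u => by
      have H1 := (hasDerivAt_const u (1:ℝ)).sub ((hasDerivAt_pow 2 u).div_const 2)
      have H := (Real.hasDerivAt_cos u).sub H1
      refine H.congr_deriv ?_
      push_cast
      ring)
    (fun u hu => by show (0:ℝ) ≤ (u) - sin u; linarith [sin_ub_1 u hu]) ht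
  have h' : (0:ℝ) ≤ cos t - (1 - t^2/2) := h
  linarith

private lemma sin_lb_3 (t : ℝ) (ht : 0 ≤ t) : t - t^3/6 ≤ sin t := by
  have h := aux_nonneg (F := fun u : ℝ => sin u - (u - u^3/6))
    (f := fun u : ℝ => cos u - (1 - u^2/2))
    (by norm_num)
    (fun u => by
      have H1 := (hasDerivAt_id u).sub ((hasDerivAt_pow 3 u).div_const 6)
      have H := (Real.hasDerivAt_sin u).sub H1
      refine H.congr_deriv ?_
      push_cast
      ring)
    (fun u hu => by show (0:ℝ) ≤ cos u - (1 - u^2/2); linarith [cos_lb_2 u hu]) ht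
  have h' : (0:ℝ) ≤ sin t - (t - t^3/6) := h
  linarith

private lemma cos_ub_4 (t : ℝ) (ht : 0 ≤ t) : cos t ≤ 1 - t^2/2 + t^4/24 := by
  have h := aux_nonneg (F := fun u : ℝ => (1 - u^2/2 + u^4/24) - cos u)
    (f := fun u : ℝ => sin u - (u - u^3/6))
    (by norm_num)
    (fun u => by
      have H1 := ((hasDerivAt_const u (1:ℝ)).sub ((hasDerivAt_pow 2 u).div_const 2)).add ((hasDerivAt_pow 4 u).div_const 24)
      have H := H1.sub (Real.hasDerivAt_cos u)
      refine H.congr_deriv ?_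
      push_cast
      ring)
    (fun u hu => by show (0:ℝ) ≤ sin u - (u - u^3/6); linarith [sin_lb_3 u hu]) ht
  have h' : (0:ℝ) ≤ (1 - t^2/2 + t^4/24) - cos t := h
  linarith

private lemma sin_ub_5 (t : ℝ) (ht : 0 ≤ t) : sin t ≤ t - t^3/6 + t^5/120 := by
  have h := aux_nonneg (F := fun u : ℝ => (u - u^3/6 + u^5/120) - sin u)
    (f := fun u : ℝ => (1 - u^2/2 + u^4/24) - cos u)
    (by norm_num)
    (fun u => by
      have H1 := ((hasDerivAt_id u).sub ((hasDerivAt_pow 3 u).div_const 6)).add ((hasDerivAt_pow 5 u).div_const 120)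
      have H := H1.sub (Real.hasDerivAt_sin u)
      refine H.congr_deriv ?_
      push_cast
      ring)
    (fun u hu => by show (0:ℝ) ≤ (1 - u^2/2 + u^4/24) - cos u; linarith [cos_ub_4 u hu]) ht
  have h' : (0:ℝ) ≤ (t - t^3/6 + t^5/120) - sin t := h
  linarith

private lemma cos_lb_6 (t : ℝ) (ht : 0 ≤ t) : 1 - t^2/2 + t^4/24 - t^6/720 ≤ cos t := by
  have h := aux_nonneg (F := fun u : ℝ => cos u - (1 - u^2/2 + u^4/24 - u^6/720))
    (f := fun u : ℝ => (u - u^3/6 + u^5/120) - sin u)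
    (by norm_num)
    (fun u => by
      have H1 := (((hasDerivAt_const u (1:ℝ)).sub ((hasDerivAt_pow 2 u).div_const 2)).add ((hasDerivAt_pow 4 u).div_const 24)).sub ((hasDerivAt_pow 6 u).div_const 720)
      have H := (Real.hasDerivAt_cos u).sub H1
      refine H.congr_deriv ?_
      push_cast
      ring)
    (fun u hu => by show (0:ℝ) ≤ (u - u^3/6 + u^5/120) - sin u; linarith [sin_ub_5 u hu]) ht
  have h' : (0:ℝ) ≤ cos t - (1 - t^2/2 + t^4/24 - t^6/720) := h
  linarith

private lemma sin_lb_7 (t : ℝ) (ht : 0 ≤ t) : t - t^3/6 + t^5/120 - t^7/5040 ≤ sin t := by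
  have h := aux_nonneg (F := fun u : ℝ => sin u - (u - u^3/6 + u^5/120 - u^7/5040))
    (f := fun u : ℝ => cos u - (1 - u^2/2 + u^4/24 - u^6/720))
    (by norm_num)
    (fun u => by
      have H1 := (((hasDerivAt_id u).sub ((hasDerivAt_pow 3 u).div_const 6)).add ((hasDerivAt_pow 5 u).div_const 120)).sub ((hasDerivAt_pow 7 u).div_const 5040)
      have H := (Real.hasDerivAt_sin u).sub H1
      refine H.congr_deriv ?_
      push_cast
      ring)
    (fun u hu => by show (0:ℝ) ≤ cos u - (1 - u^2/2 + u^4/24 - u^6/720); linarith [cos_lb_6 u hu]) ht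
  have h' : (0:ℝ) ≤ sin t - (t - t^3/6 + t^5/120 - t^7/5040) := h
  linarith

private lemma cos_ub_8 (t : ℝ) (ht : 0 ≤ t) : cos t ≤ 1 - t^2/2 + t^4/24 - t^6/720 + t^8/40320 := by
  have h := aux_nonneg (F := fun u : ℝ => (1 - u^2/2 + u^4/24 - u^6/720 + u^8/40320) - cos u)
    (f := fun u : ℝ => sin u - (u - u^3/6 + u^5/120 - u^7/5040))
    (by norm_num)
    (fun u => by
      have H1 := ((((hasDerivAt_const u (1:ℝ)).sub ((hasDerivAt_pow 2 u).div_const 2)).add ((hasDerivAt_pow 4 u).div_const 24)).sub ((hasDerivAt_pow 6 u).div_const 720)).add ((hasDerivAt_pow 8 u).div_const 40320)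
      have H := H1.sub (Real.hasDerivAt_cos u)
      refine H.congr_deriv ?_
      push_cast
      ring)
    (fun u hu => by show (0:ℝ) ≤ sin u - (u - u^3/6 + u^5/120 - u^7/5040); linarith [sin_lb_7 u hu]) ht
  have h' : (0:ℝ) ≤ (1 - t^2/2 + t^4/24 - t^6/720 + t^8/40320) - cos t := h
  linarith

private lemma sin_ub_9 (t : ℝ) (ht : 0 ≤ t) : sin t ≤ t - t^3/6 + t^5/120 - t^7/5040 + t^9/362880 := by
  have h := aux_nonneg (F := fun u : ℝ => (u - u^3/6 + u^5/120 - u^7/5040 + u^9/362880) - sin u)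
    (f := fun u : ℝ => (1 - u^2/2 + u^4/24 - u^6/720 + u^8/40320) - cos u)
    (by norm_num)
    (fun u => by
      have H1 := ((((hasDerivAt_id u).sub ((hasDerivAt_pow 3 u).div_const 6)).add ((hasDerivAt_pow 5 u).div_const 120)).sub ((hasDerivAt_pow 7 u).div_const 5040)).add ((hasDerivAt_pow 9 u).div_const 362880)
      have H := H1.sub (Real.hasDerivAt_sin u)
      refine H.congr_deriv ?_
      push_cast
      ring)
    (fun u hu => by show (0:ℝ) ≤ (1 - u^2/2 + u^4/24 - u^6/720 + u^8/40320) - cos u; linarith [cos_ub_8 u hu]) ht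
  have h' : (0:ℝ) ≤ (t - t^3/6 + t^5/120 - t^7/5040 + t^9/362880) - sin t := h
  linarith

private lemma cos_lb_10 (t : ℝ) (ht : 0 ≤ t) : 1 - t^2/2 + t^4/24 - t^6/720 + t^8/40320 - t^10/3628800 ≤ cos t := by
  have h := aux_nonneg (F := fun u : ℝ => cos u - (1 - u^2/2 + u^4/24 - u^6/720 + u^8/40320 - u^10/3628800))
    (f := fun u : ℝ => (u - u^3/6 + u^5/120 - u^7/5040 + u^9/362880) - sin u)
    (by norm_num)
    (fun u => by
      have H1 := (((((hasDerivAt_const u (1:ℝ)).sub ((hasDerivAt_pow 2 u).div_const 2)).add ((hasDerivAt_pow 4 u).div_const 24)).sub ((hasDerivAt_pow 6 u).div_const 720)).add ((hasDerivAt_pow 8 u).div_const 40320)).sub ((hasDerivAt_pow 10 u).div_const 3628800)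
      have H := (Real.hasDerivAt_cos u).sub H1
      refine H.congr_deriv ?_
      push_cast
      ring)
    (fun u hu => by show (0:ℝ) ≤ (u - u^3/6 + u^5/120 - u^7/5040 + u^9/362880) - sin u; linarith [sin_ub_9 u hu]) ht
  have h' : (0:ℝ) ≤ cos t - (1 - t^2/2 + t^4/24 - t^6/720 + t^8/40320 - t^10/3628800) := h
  linarith

private lemma sin_lb_11 (t : ℝ) (ht : 0 ≤ t) : t - t^3/6 + t^5/120 - t^7/5040 + t^9/362880 - t^11/39916800 ≤ sin t := by
  have h := aux_nonneg (F := fun u : ℝ => sin u - (u - u^3/6 + u^5/120 - u^7/5040 + u^9/362880 - u^11/39916800))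
    (f := fun u : ℝ => cos u - (1 - u^2/2 + u^4/24 - u^6/720 + u^8/40320 - u^10/3628800))
    (by norm_num)
    (fun u => by
      have H1 := (((((hasDerivAt_id u).sub ((hasDerivAt_pow 3 u).div_const 6)).add ((hasDerivAt_pow 5 u).div_const 120)).sub ((hasDerivAt_pow 7 u).div_const 5040)).add ((hasDerivAt_pow 9 u).div_const 362880)).sub ((hasDerivAt_pow 11 u).div_const 39916800)
      have H := (Real.hasDerivAt_sin u).sub H1
      refine H.congr_deriv ?_
      push_cast
      ring)
    (fun u hu => by show (0:ℝ) ≤ cos u - (1 - u^2/2 + u^4/24 - u^6/720 + u^8/40320 - u^10/3628800); linarith [cos_lb_10 u hu]) ht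
  have h' : (0:ℝ) ≤ sin t - (t - t^3/6 + t^5/120 - t^7/5040 + t^9/362880 - t^11/39916800) := h
  linarith

private lemma cos_ub_12 (t : ℝ) (ht : 0 ≤ t) : cos t ≤ 1 - t^2/2 + t^4/24 - t^6/720 + t^8/40320 - t^10/3628800 + t^12/479001600 := by
  have h := aux_nonneg (F := fun u : ℝ => (1 - u^2/2 + u^4/24 - u^6/720 + u^8/40320 - u^10/3628800 + u^12/479001600) - cos u)
    (f := fun u : ℝ => sin u - (u - u^3/6 + u^5/120 - u^7/5040 + u^9/362880 - u^11/39916800))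
    (by norm_num)
    (fun u => by
      have H1 := ((((((hasDerivAt_const u (1:ℝ)).sub ((hasDerivAt_pow 2 u).div_const 2)).add ((hasDerivAt_pow 4 u).div_const 24)).sub ((hasDerivAt_pow 6 u).div_const 720)).add ((hasDerivAt_pow 8 u).div_const 40320)).sub ((hasDerivAt_pow 10 u).div_const 3628800)).add ((hasDerivAt_pow 12 u).div_const 479001600)
      have H := H1.sub (Real.hasDerivAt_cos u)
      refine H.congr_deriv ?_
      push_cast
      ring)
    (fun u hu => by show (0:ℝ) ≤ sin u - (u - u^3/6 + u^5/120 - u^7/5040 + u^9/362880 - u^11/39916800); linarith [sin_lb_11 u hu]) ht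
  have h' : (0:ℝ) ≤ (1 - t^2/2 + t^4/24 - t^6/720 + t^8/40320 - t^10/3628800 + t^12/479001600) - cos t := h
  linarith

private lemma sin_ub_13 (t : ℝ) (ht : 0 ≤ t) : sin t ≤ t - t^3/6 + t^5/120 - t^7/5040 + t^9/362880 - t^11/39916800 + t^13/6227020800 := by
  have h := aux_nonneg (F := fun u : ℝ => (u - u^3/6 + u^5/120 - u^7/5040 + u^9/362880 - u^11/39916800 + u^13/6227020800) - sin u)
    (f := fun u : ℝ => (1 - u^2/2 + u^4/24 - u^6/720 + u^8/40320 - u^10/3628800 + u^12/479001600) - cos u)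
    (by norm_num)
    (fun u => by
      have H1 := ((((((hasDerivAt_id u).sub ((hasDerivAt_pow 3 u).div_const 6)).add ((hasDerivAt_pow 5 u).div_const 120)).sub ((hasDerivAt_pow 7 u).div_const 5040)).add ((hasDerivAt_pow 9 u).div_const 362880)).sub ((hasDerivAt_pow 11 u).div_const 39916800)).add ((hasDerivAt_pow 13 u).div_const 6227020800)
      have H := H1.sub (Real.hasDerivAt_sin u)
      refine H.congr_deriv ?_
      push_cast
      ring)
    (fun u hu => by show (0:ℝ) ≤ (1 - u^2/2 + u^4/24 - u^6/720 + u^8/40320 - u^10/3628800 + u^12/479001600) - cos u; linarith [cos_ub_12 u hu]) ht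
  have h' : (0:ℝ) ≤ (t - t^3/6 + t^5/120 - t^7/5040 + t^9/362880 - t^11/39916800 + t^13/6227020800) - sin t := h
  linarith

private lemma cos_lb_14 (t : ℝ) (ht : 0 ≤ t) : 1 - t^2/2 + t^4/24 - t^6/720 + t^8/40320 - t^10/3628800 + t^12/479001600 - t^14/87178291200 ≤ cos t := by
  have h := aux_nonneg (F := fun u : ℝ => cos u - (1 - u^2/2 + u^4/24 - u^6/720 + u^8/40320 - u^10/3628800 + u^12/479001600 - u^14/87178291200))
    (f := fun u : ℝ => (u - u^3/6 + u^5/120 - u^7/5040 + u^9/362880 - u^11/39916800 + u^13/6227020800) - sin u)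
    (by norm_num)
    (fun u => by
      have H1 := (((((((hasDerivAt_const u (1:ℝ)).sub ((hasDerivAt_pow 2 u).div_const 2)).add ((hasDerivAt_pow 4 u).div_const 24)).sub ((hasDerivAt_pow 6 u).div_const 720)).add ((hasDerivAt_pow 8 u).div_const 40320)).sub ((hasDerivAt_pow 10 u).div_const 3628800)).add ((hasDerivAt_pow 12 u).div_const 479001600)).sub ((hasDerivAt_pow 14 u).div_const 87178291200)
      have H := (Real.hasDerivAt_cos u).sub H1
      refine H.congr_deriv ?_
      push_cast
      ring)
    (fun u hu => by show (0:ℝ) ≤ (u - u^3/6 + u^5/120 - u^7/5040 + u^9/362880 - u^11/39916800 + u^13/6227020800) - sin u; linarith [sin_ub_13 u hu]) ht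
  have h' : (0:ℝ) ≤ cos t - (1 - t^2/2 + t^4/24 - t^6/720 + t^8/40320 - t^10/3628800 + t^12/479001600 - t^14/87178291200) := h
  linarith

private lemma qcase0 (x : ℝ) (hx0 : 0 ≤ x) (hax : (0:ℝ) ≤ x) (hxb : x ≤ ((1/2):ℝ)) :
    (0:ℝ) < (16/467775) + (507379/59439744000) * x^2 + (-183319/71327692800) * x^4 + (26582971/94152554496000) * x^6 + (-30999229/1647669703680000) * x^8 + (1159438627/1304954405314560000) * x^10 + (-2516616049/78297264318873600000) * x^12 + (949072567/1017864436145356800000) * x^14 + (-173585471/7772782966928179200000) * x^16 + (9240257359/20520147032690393088000000) * x^18 + (-3495107237/451443234719188647936000000) * x^20 + (667280813/5834035648678745604096000000) * x^22 + (-4973268437/3412910854477066178396160000000) * x^24 + (405731737/25353052061829634468085760000000) * x^26 + (-321165847/2129656373193689295319203840000000) * x^28 + (535853/443678411082018603191500800000000) * x^30 + (-7576313/937048804205223289940449689600000000) * x^32 + (3749/85186254927747571812768153600000000) * x^34 + (-1789/9638216271825153839387482521600000000) * x^36 + (149/269870055611104307502849510604800000000) * x^38 + (-19/21049864337666135985222261827174400000000)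 * x^40 := by
  have hL2 : (0:ℝ) ≤ x^2 := pow_nonneg hx0 2
  have hU4 : x^4 ≤ ((1/16):ℝ) := by
    calc x^4 ≤ ((1/2):ℝ)^4 := pow_le_pow_left₀ hx0 hxb 4
    _ = ((1/16):ℝ) := by norm_num
  have hL6 : (0:ℝ) ≤ x^6 := pow_nonneg hx0 6
  have hU8 : x^8 ≤ ((1/256):ℝ) := by
    calc x^8 ≤ ((1/2):ℝ)^8 := pow_le_pow_left₀ hx0 hxb 8
    _ = ((1/256):ℝ) := by norm_num
  have hL10 : (0:ℝ) ≤ x^10 := pow_nonneg hx0 10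
  have hU12 : x^12 ≤ ((1/4096):ℝ) := by
    calc x^12 ≤ ((1/2):ℝ)^12 := pow_le_pow_left₀ hx0 hxb 12
    _ = ((1/4096):ℝ) := by norm_num
  have hL14 : (0:ℝ) ≤ x^14 := pow_nonneg hx0 14
  have hU16 : x^16 ≤ ((1/65536):ℝ) := by
    calc x^16 ≤ ((1/2):ℝ)^16 := pow_le_pow_left₀ hx0 hxb 16
    _ = ((1/65536):ℝ) := by norm_num
  have hL18 : (0:ℝ) ≤ x^18 := pow_nonneg hx0 18
  have hU20 : x^20 ≤ ((1/1048576):ℝ) := by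
    calc x^20 ≤ ((1/2):ℝ)^20 := pow_le_pow_left₀ hx0 hxb 20
    _ = ((1/1048576):ℝ) := by norm_num
  have hL22 : (0:ℝ) ≤ x^22 := pow_nonneg hx0 22
  have hU24 : x^24 ≤ ((1/16777216):ℝ) := by
    calc x^24 ≤ ((1/2):ℝ)^24 := pow_le_pow_left₀ hx0 hxb 24
    _ = ((1/16777216):ℝ) := by norm_num
  have hL26 : (0:ℝ) ≤ x^26 := pow_nonneg hx0 26
  have hU28 : x^28 ≤ ((1/268435456):ℝ) := by
    calc x^28 ≤ ((1/2):ℝ)^28 := pow_le_pow_left₀ hx0 hxb 28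
    _ = ((1/268435456):ℝ) := by norm_num
  have hL30 : (0:ℝ) ≤ x^30 := pow_nonneg hx0 30
  have hU32 : x^32 ≤ ((1/4294967296):ℝ) := by
    calc x^32 ≤ ((1/2):ℝ)^32 := pow_le_pow_left₀ hx0 hxb 32
    _ = ((1/4294967296):ℝ) := by norm_num
  have hL34 : (0:ℝ) ≤ x^34 := pow_nonneg hx0 34
  have hU36 : x^36 ≤ ((1/68719476736):ℝ) := by
    calc x^36 ≤ ((1/2):ℝ)^36 := pow_le_pow_left₀ hx0 hxb 36
    _ = ((1/68719476736):ℝ) := by norm_num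
  have hL38 : (0:ℝ) ≤ x^38 := pow_nonneg hx0 38
  have hU40 : x^40 ≤ ((1/1099511627776):ℝ) := by
    calc x^40 ≤ ((1/2):ℝ)^40 := pow_le_pow_left₀ hx0 hxb 40
    _ = ((1/1099511627776):ℝ) := by norm_num
  linarith

private lemma qcase1 (x : ℝ) (hx0 : 0 ≤ x) (hax : ((1/2):ℝ) ≤ x) (hxb : x ≤ (1:ℝ)) :
    (0:ℝ) < (16/467775) + (507379/59439744000) * x^2 + (-183319/71327692800) * x^4 + (26582971/94152554496000) * x^6 + (-30999229/1647669703680000) * x^8 + (1159438627/1304954405314560000) * x^10 + (-2516616049/78297264318873600000) * x^12 + (949072567/1017864436145356800000) * x^14 + (-173585471/7772782966928179200000) * x^16 + (9240257359/20520147032690393088000000) * x^18 + (-3495107237/451443234719188647936000000) * x^20 + (667280813/5834035648678745604096000000) * x^22 + (-4973268437/3412910854477066178396160000000) * x^24 + (405731737/25353052061829634468085760000000) * x^26 + (-321165847/2129656373193689295319203840000000) * x^28 + (535853/443678411082018603191500800000000) * x^30 + (-7576313/937048804205223289940449689600000000) * x^32 + (3749/85186254927747571812768153600000000) * x^34 +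 (-1789/9638216271825153839387482521600000000) * x^36 + (149/269870055611104307502849510604800000000) * x^38 + (-19/21049864337666135985222261827174400000000) * x^40 := by
  have hL2 : ((1/4):ℝ) ≤ x^2 := by
    calc ((1/4):ℝ) = ((1/2):ℝ)^2 := by norm_num
    _ ≤ x^2 := pow_le_pow_left₀ (by norm_num) hax 2
  have hU4 : x^4 ≤ (1:ℝ) := by
    calc x^4 ≤ (1:ℝ)^4 := pow_le_pow_left₀ hx0 hxb 4
    _ = (1:ℝ) := by norm_num
  have hL6 : ((1/64):ℝ) ≤ x^6 := by
    calc ((1/64):ℝ) = ((1/2):ℝ)^6 := by norm_num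
    _ ≤ x^6 := pow_le_pow_left₀ (by norm_num) hax 6
  have hU8 : x^8 ≤ (1:ℝ) := by
    calc x^8 ≤ (1:ℝ)^8 := pow_le_pow_left₀ hx0 hxb 8
    _ = (1:ℝ) := by norm_num
  have hL10 : ((1/1024):ℝ) ≤ x^10 := by
    calc ((1/1024):ℝ) = ((1/2):ℝ)^10 := by norm_num
    _ ≤ x^10 := pow_le_pow_left₀ (by norm_num) hax 10
  have hU12 : x^12 ≤ (1:ℝ) := by
    calc x^12 ≤ (1:ℝ)^12 := pow_le_pow_left₀ hx0 hxb 12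
    _ = (1:ℝ) := by norm_num
  have hL14 : ((1/16384):ℝ) ≤ x^14 := by
    calc ((1/16384):ℝ) = ((1/2):ℝ)^14 := by norm_num
    _ ≤ x^14 := pow_le_pow_left₀ (by norm_num) hax 14
  have hU16 : x^16 ≤ (1:ℝ) := by
    calc x^16 ≤ (1:ℝ)^16 := pow_le_pow_left₀ hx0 hxb 16
    _ = (1:ℝ) := by norm_num
  have hL18 : ((1/262144):ℝ) ≤ x^18 := by
    calc ((1/262144):ℝ) = ((1/2):ℝ)^18 := by norm_num
    _ ≤ x^18 := pow_le_pow_left₀ (by norm_num) hax 18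
  have hU20 : x^20 ≤ (1:ℝ) := by
    calc x^20 ≤ (1:ℝ)^20 := pow_le_pow_left₀ hx0 hxb 20
    _ = (1:ℝ) := by norm_num
  have hL22 : ((1/4194304):ℝ) ≤ x^22 := by
    calc ((1/4194304):ℝ) = ((1/2):ℝ)^22 := by norm_num
    _ ≤ x^22 := pow_le_pow_left₀ (by norm_num) hax 22
  have hU24 : x^24 ≤ (1:ℝ) := by
    calc x^24 ≤ (1:ℝ)^24 := pow_le_pow_left₀ hx0 hxb 24
    _ = (1:ℝ) := by norm_num
  have hL26 : ((1/67108864):ℝ) ≤ x^26 := by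
    calc ((1/67108864):ℝ) = ((1/2):ℝ)^26 := by norm_num
    _ ≤ x^26 := pow_le_pow_left₀ (by norm_num) hax 26
  have hU28 : x^28 ≤ (1:ℝ) := by
    calc x^28 ≤ (1:ℝ)^28 := pow_le_pow_left₀ hx0 hxb 28
    _ = (1:ℝ) := by norm_num
  have hL30 : ((1/1073741824):ℝ) ≤ x^30 := by
    calc ((1/1073741824):ℝ) = ((1/2):ℝ)^30 := by norm_num
    _ ≤ x^30 := pow_le_pow_left₀ (by norm_num) hax 30
  have hU32 : x^32 ≤ (1:ℝ) := by
    calc x^32 ≤ (1:ℝ)^32 := pow_le_pow_left₀ hx0 hxb 32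
    _ = (1:ℝ) := by norm_num
  have hL34 : ((1/17179869184):ℝ) ≤ x^34 := by
    calc ((1/17179869184):ℝ) = ((1/2):ℝ)^34 := by norm_num
    _ ≤ x^34 := pow_le_pow_left₀ (by norm_num) hax 34
  have hU36 : x^36 ≤ (1:ℝ) := by
    calc x^36 ≤ (1:ℝ)^36 := pow_le_pow_left₀ hx0 hxb 36
    _ = (1:ℝ) := by norm_num
  have hL38 : ((1/274877906944):ℝ) ≤ x^38 := by
    calc ((1/274877906944):ℝ) = ((1/2):ℝ)^38 := by norm_num
    _ ≤ x^38 := pow_le_pow_left₀ (by norm_num) hax 38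
  have hU40 : x^40 ≤ (1:ℝ) := by
    calc x^40 ≤ (1:ℝ)^40 := pow_le_pow_left₀ hx0 hxb 40
    _ = (1:ℝ) := by norm_num
  linarith

private lemma qcase2 (x : ℝ) (hx0 : 0 ≤ x) (hax : (1:ℝ) ≤ x) (hxb : x ≤ ((3/2):ℝ)) :
    (0:ℝ) < (16/467775) + (507379/59439744000) * x^2 + (-183319/71327692800) * x^4 + (26582971/94152554496000) * x^6 + (-30999229/1647669703680000) * x^8 + (1159438627/1304954405314560000) * x^10 + (-2516616049/78297264318873600000) * x^12 + (949072567/1017864436145356800000) * x^14 + (-173585471/7772782966928179200000) * x^16 + (9240257359/20520147032690393088000000) * x^18 + (-3495107237/451443234719188647936000000) * x^20 + (667280813/5834035648678745604096000000) * x^22 + (-4973268437/3412910854477066178396160000000) * x^24 + (405731737/25353052061829634468085760000000) * x^26 + (-321165847/2129656373193689295319203840000000) * x^28 + (535853/443678411082018603191500800000000) * x^30 + (-7576313/937048804205223289940449689600000000) * x^32 + (3749/85186254927747571812768153600000000) * x^34 + (-1789/9638216271825153839387482521600000000) * x^36 + (149/269870055611104307502849510604800000000) * x^38 + (-19/21049864337666135985222261827174400000000)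 * x^40 := by
  have hL2 : (1:ℝ) ≤ x^2 := by
    calc (1:ℝ) = (1:ℝ)^2 := by norm_num
    _ ≤ x^2 := pow_le_pow_left₀ (by norm_num) hax 2
  have hU4 : x^4 ≤ ((81/16):ℝ) := by
    calc x^4 ≤ ((3/2):ℝ)^4 := pow_le_pow_left₀ hx0 hxb 4
    _ = ((81/16):ℝ) := by norm_num
  have hL6 : (1:ℝ) ≤ x^6 := by
    calc (1:ℝ) = (1:ℝ)^6 := by norm_num
    _ ≤ x^6 := pow_le_pow_left₀ (by norm_num) hax 6
  have hU8 : x^8 ≤ ((6561/256):ℝ) := by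
    calc x^8 ≤ ((3/2):ℝ)^8 := pow_le_pow_left₀ hx0 hxb 8
    _ = ((6561/256):ℝ) := by norm_num
  have hL10 : (1:ℝ) ≤ x^10 := by
    calc (1:ℝ) = (1:ℝ)^10 := by norm_num
    _ ≤ x^10 := pow_le_pow_left₀ (by norm_num) hax 10
  have hU12 : x^12 ≤ ((531441/4096):ℝ) := by
    calc x^12 ≤ ((3/2):ℝ)^12 := pow_le_pow_left₀ hx0 hxb 12
    _ = ((531441/4096):ℝ) := by norm_num
  have hL14 : (1:ℝ) ≤ x^14 := by
    calc (1:ℝ) = (1:ℝ)^14 := by norm_num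
    _ ≤ x^14 := pow_le_pow_left₀ (by norm_num) hax 14
  have hU16 : x^16 ≤ ((43046721/65536):ℝ) := by
    calc x^16 ≤ ((3/2):ℝ)^16 := pow_le_pow_left₀ hx0 hxb 16
    _ = ((43046721/65536):ℝ) := by norm_num
  have hL18 : (1:ℝ) ≤ x^18 := by
    calc (1:ℝ) = (1:ℝ)^18 := by norm_num
    _ ≤ x^18 := pow_le_pow_left₀ (by norm_num) hax 18
  have hU20 : x^20 ≤ ((3486784401/1048576):ℝ) := by
    calc x^20 ≤ ((3/2):ℝ)^20 := pow_le_pow_left₀ hx0 hxb 20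
    _ = ((3486784401/1048576):ℝ) := by norm_num
  have hL22 : (1:ℝ) ≤ x^22 := by
    calc (1:ℝ) = (1:ℝ)^22 := by norm_num
    _ ≤ x^22 := pow_le_pow_left₀ (by norm_num) hax 22
  have hU24 : x^24 ≤ ((282429536481/16777216):ℝ) := by
    calc x^24 ≤ ((3/2):ℝ)^24 := pow_le_pow_left₀ hx0 hxb 24
    _ = ((282429536481/16777216):ℝ) := by norm_num
  have hL26 : (1:ℝ) ≤ x^26 := by
    calc (1:ℝ) = (1:ℝ)^26 := by norm_num
    _ ≤ x^26 := pow_le_pow_left₀ (by norm_num) hax 26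
  have hU28 : x^28 ≤ ((22876792454961/268435456):ℝ) := by
    calc x^28 ≤ ((3/2):ℝ)^28 := pow_le_pow_left₀ hx0 hxb 28
    _ = ((22876792454961/268435456):ℝ) := by norm_num
  have hL30 : (1:ℝ) ≤ x^30 := by
    calc (1:ℝ) = (1:ℝ)^30 := by norm_num
    _ ≤ x^30 := pow_le_pow_left₀ (by norm_num) hax 30
  have hU32 : x^32 ≤ ((1853020188851841/4294967296):ℝ) := by
    calc x^32 ≤ ((3/2):ℝ)^32 := pow_le_pow_left₀ hx0 hxb 32
    _ = ((1853020188851841/4294967296):ℝ) := by norm_num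
  have hL34 : (1:ℝ) ≤ x^34 := by
    calc (1:ℝ) = (1:ℝ)^34 := by norm_num
    _ ≤ x^34 := pow_le_pow_left₀ (by norm_num) hax 34
  have hU36 : x^36 ≤ ((150094635296999121/68719476736):ℝ) := by
    calc x^36 ≤ ((3/2):ℝ)^36 := pow_le_pow_left₀ hx0 hxb 36
    _ = ((150094635296999121/68719476736):ℝ) := by norm_num
  have hL38 : (1:ℝ) ≤ x^38 := by
    calc (1:ℝ) = (1:ℝ)^38 := by norm_num
    _ ≤ x^38 := pow_le_pow_left₀ (by norm_num) hax 38
  have hU40 : x^40 ≤ ((12157665459056928801/1099511627776):ℝ) := by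
    calc x^40 ≤ ((3/2):ℝ)^40 := pow_le_pow_left₀ hx0 hxb 40
    _ = ((12157665459056928801/1099511627776):ℝ) := by norm_num
  linarith

private lemma qcase3 (x : ℝ) (hx0 : 0 ≤ x) (hax : ((3/2):ℝ) ≤ x) (hxb : x ≤ ((1571/1000):ℝ)) :
    (0:ℝ) < (16/467775) + (507379/59439744000) * x^2 + (-183319/71327692800) * x^4 + (26582971/94152554496000) * x^6 + (-30999229/1647669703680000) * x^8 + (1159438627/1304954405314560000) * x^10 + (-2516616049/78297264318873600000) * x^12 + (949072567/1017864436145356800000) * x^14 + (-173585471/7772782966928179200000) * x^16 + (9240257359/20520147032690393088000000) * x^18 + (-3495107237/451443234719188647936000000) * x^20 + (667280813/5834035648678745604096000000) * x^22 + (-4973268437/3412910854477066178396160000000) * x^24 + (405731737/25353052061829634468085760000000) * x^26 + (-321165847/2129656373193689295319203840000000) * x^28 + (535853/443678411082018603191500800000000) * x^30 + (-7576313/937048804205223289940449689600000000) * x^32 + (3749/85186254927747571812768153600000000) * x^34 + (-1789/9638216271825153839387482521600000000) * x^36 + (149/269870055611104307502849510604800000000) * x^38 + (-19/21049864337666135985222261827174400000000)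 * x^40 := by
  have hL2 : ((9/4):ℝ) ≤ x^2 := by
    calc ((9/4):ℝ) = ((3/2):ℝ)^2 := by norm_num
    _ ≤ x^2 := pow_le_pow_left₀ (by norm_num) hax 2
  have hU4 : x^4 ≤ ((6091226377681/1000000000000):ℝ) := by
    calc x^4 ≤ ((1571/1000):ℝ)^4 := pow_le_pow_left₀ hx0 hxb 4
    _ = ((6091226377681/1000000000000):ℝ) := by norm_num
  have hL6 : ((729/64):ℝ) ≤ x^6 := by
    calc ((729/64):ℝ) = ((3/2):ℝ)^6 := by norm_num
    _ ≤ x^6 := pow_le_pow_left₀ (by norm_num) hax 6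
  have hU8 : x^8 ≤ ((37103038784156796454937761/1000000000000000000000000):ℝ) := by
    calc x^8 ≤ ((1571/1000):ℝ)^8 := pow_le_pow_left₀ hx0 hxb 8
    _ = ((37103038784156796454937761/1000000000000000000000000):ℝ) := by norm_num
  have hL10 : ((59049/1024):ℝ) ≤ x^10 := by
    calc ((59049/1024):ℝ) = ((3/2):ℝ)^10 := by norm_num
    _ ≤ x^10 := pow_le_pow_left₀ (by norm_num) hax 10
  have hU12 : x^12 ≤ ((226003008534177057682147760082334512241/1000000000000000000000000000000000000):ℝ) := by
    calc x^12 ≤ ((1571/1000):ℝ)^12 := pow_le_pow_left₀ hx0 hxb 12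
    _ = ((226003008534177057682147760082334512241/1000000000000000000000000000000000000):ℝ) := by norm_num
  have hL14 : ((4782969/16384):ℝ) ≤ x^14 := by
    calc ((4782969/16384):ℝ) = ((3/2):ℝ)^14 := by norm_num
    _ ≤ x^14 := pow_le_pow_left₀ (by norm_num) hax 14
  have hU16 : x^16 ≤ ((1376635487018643448553523494506526297315878383693121/1000000000000000000000000000000000000000000000000):ℝ) := by
    calc x^16 ≤ ((1571/1000):ℝ)^16 := pow_le_pow_left₀ hx0 hxb 16
    _ = ((1376635487018643448553523494506526297315878383693121/1000000000000000000000000000000000000000000000000):ℝ) := by norm_num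
  have hL18 : ((387420489/262144):ℝ) ≤ x^18 := by
    calc ((387420489/262144):ℝ) = ((3/2):ℝ)^18 := by norm_num
    _ ≤ x^18 := pow_le_pow_left₀ (by norm_num) hax 18
  have hU20 : x^20 ≤ ((8385398390979690831247160994492317080613567120147778487947632401/1000000000000000000000000000000000000000000000000000000000000):ℝ) := by
    calc x^20 ≤ ((1571/1000):ℝ)^20 := pow_le_pow_left₀ hx0 hxb 20
    _ = ((8385398390979690831247160994492317080613567120147778487947632401/1000000000000000000000000000000000000000000000000000000000000):ℝ) := by norm_num
  have hL22 : ((31381059609/4194304):ℝ) ≤ x^22 := by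
    calc ((31381059609/4194304):ℝ) = ((3/2):ℝ)^22 := by norm_num
    _ ≤ x^22 := pow_le_pow_left₀ (by norm_num) hax 22
  have hU24 : x^24 ≤ ((51077359866499307966854932312096470162530263318201915672560432225963378842081/1000000000000000000000000000000000000000000000000000000000000000000000000):ℝ) := by
    calc x^24 ≤ ((1571/1000):ℝ)^24 := pow_le_pow_left₀ hx0 hxb 24
    _ = ((51077359866499307966854932312096470162530263318201915672560432225963378842081/1000000000000000000000000000000000000000000000000000000000000000000000000):ℝ) := by norm_num
  have hL26 : ((2541865828329/67108864):ℝ) ≤ x^26 := by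
    calc ((2541865828329/67108864):ℝ) = ((3/2):ℝ)^26 := by norm_num
    _ ≤ x^26 := pow_le_pow_left₀ (by norm_num) hax 26
  have hU28 : x^28 ≤ ((311123761721125465409039034157419824127135513165270162276325304474322611784808565761994161/1000000000000000000000000000000000000000000000000000000000000000000000000000000000000):ℝ) := by
    calc x^28 ≤ ((1571/1000):ℝ)^28 := pow_le_pow_left₀ hx0 hxb 28
    _ = ((311123761721125465409039034157419824127135513165270162276325304474322611784808565761994161/1000000000000000000000000000000000000000000000000000000000000000000000000000000000000):ℝ) := by norm_num
  have hL30 : ((205891132094649/1073741824):ℝ) ≤ x^30 := by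
    calc ((205891132094649/1073741824):ℝ) = ((3/2):ℝ)^30 := by norm_num
    _ ≤ x^30 := pow_le_pow_left₀ (by norm_num) hax 30
  have hU32 : x^32 ≤ ((1895125264119057634758026101025835185247111739476303657254172037756727544458170682290452570887102720641/1000000000000000000000000000000000000000000000000000000000000000000000000000000000000000000000000):ℝ) := by
    calc x^32 ≤ ((1571/1000):ℝ)^32 := pow_le_pow_left₀ hx0 hxb 32
    _ = ((1895125264119057634758026101025835185247111739476303657254172037756727544458170682290452570887102720641/1000000000000000000000000000000000000000000000000000000000000000000000000000000000000000000000000):ℝ) := by norm_num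
  have hL34 : ((16677181699666569/17179869184):ℝ) ≤ x^34 := by
    calc ((16677181699666569/17179869184):ℝ) = ((3/2):ℝ)^34 := by norm_num
    _ ≤ x^34 := pow_le_pow_left₀ (by norm_num) hax 34
  have hU36 : x^36 ≤ ((11543636997811675838086398848293249813630482051717696098111542900269709885718380890911705709694780581851038500413521/1000000000000000000000000000000000000000000000000000000000000000000000000000000000000000000000000000000000000):ℝ) := by
    calc x^36 ≤ ((1571/1000):ℝ)^36 := pow_le_pow_left₀ hx0 hxb 36
    _ = ((11543636997811675838086398848293249813630482051717696098111542900269709885718380890911705709694780581851038500413521/1000000000000000000000000000000000000000000000000000000000000000000000000000000000000000000000000000000000000):ℝ) := by norm_num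
  have hL38 : ((1350851717672992089/274877906944):ℝ) ≤ x^38 := by
    calc ((1350851717672992089/274877906944):ℝ) = ((3/2):ℝ)^38 := by norm_num
    _ ≤ x^38 := pow_le_pow_left₀ (by norm_num) hax 38
  have hU40 : x^40 ≤ ((70314906175444787939035205115403102311524029527730266907706761045103897985109129708628358783665223687700598774801921741425024801/1000000000000000000000000000000000000000000000000000000000000000000000000000000000000000000000000000000000000000000000000):ℝ) := by
    calc x^40 ≤ ((1571/1000):ℝ)^40 := pow_le_pow_left₀ hx0 hxb 40
    _ = ((70314906175444787939035205115403102311524029527730266907706761045103897985109129708628358783665223687700598774801921741425024801/1000000000000000000000000000000000000000000000000000000000000000000000000000000000000000000000000000000000000000000000000):ℝ) := by norm_num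
  linarith

private lemma qpos (x : ℝ) (hx0 : 0 ≤ x) (hx1 : x ≤ (1571/1000:ℝ)) :
    (0:ℝ) < (16/467775) + (507379/59439744000) * x^2 + (-183319/71327692800) * x^4 + (26582971/94152554496000) * x^6 + (-30999229/1647669703680000) * x^8 + (1159438627/1304954405314560000) * x^10 + (-2516616049/78297264318873600000) * x^12 + (949072567/1017864436145356800000) * x^14 + (-173585471/7772782966928179200000) * x^16 + (9240257359/20520147032690393088000000) * x^18 + (-3495107237/451443234719188647936000000) * x^20 + (667280813/5834035648678745604096000000) * x^22 + (-4973268437/3412910854477066178396160000000) * x^24 + (405731737/25353052061829634468085760000000) * x^26 + (-321165847/2129656373193689295319203840000000) * x^28 + (535853/443678411082018603191500800000000) * x^30 + (-7576313/937048804205223289940449689600000000) * x^32 + (3749/85186254927747571812768153600000000) * x^34 + (-1789/9638216271825153839387482521600000000) * x^36 + (149/269870055611104307502849510604800000000) * x^38 + (-19/21049864337666135985222261827174400000000) * x^40 := by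
  rcases le_or_gt x (1/2) with h|h
  · exact qcase0 x hx0 hx0 h
  rcases le_or_gt x 1 with h2|h2
  · exact qcase1 x hx0 h.le h2
  rcases le_or_gt x (3/2) with h3|h3
  · exact qcase2 x hx0 h2.le h3
  · exact qcase3 x hx0 h3.le hx1

private lemma lpos (x : ℝ) (hx0 : 0 < x) (hx1 : x ≤ (1571/1000:ℝ)) :
    (0:ℝ) < 2*x^3 - 7*x*(x - x^3/6 + x^5/120 - x^7/5040 + x^9/362880 - x^11/39916800 + x^13/6227020800)^2 - 2*x*(x - x^3/6 + x^5/120 - x^7/5040 + x^9/362880 - x^11/39916800 + x^13/6227020800)^4 + (32/45*x^5 - 16/945*x^7)*(x - x^3/6 + x^5/120 - x^7/5040 + x^9/362880 - x^11/39916800)^2 + (1 - x^2/2 + x^4/24 - x^6/720 + x^8/40320 - x^10/3628800 + x^12/479001600 - x^14/87178291200)*(14*x^2*(x - x^3/6 + x^5/120 - x^7/5040 + x^9/362880 - x^11/39916800) - 9*(x - x^3/6 + x^5/120 - x^7/5040 + x^9/362880 - x^11/39916800 + x^13/6227020800)^3) - (14*x^2*(x^13/6227020800) + 9*((x - x^3/6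 + x^5/120 - x^7/5040 + x^9/362880 - x^11/39916800 + x^13/6227020800)^3 - (x - x^3/6 + x^5/120 - x^7/5040 + x^9/362880 - x^11/39916800)^3)) := by
  have hE : (2*x^3 - 7*x*(x - x^3/6 + x^5/120 - x^7/5040 + x^9/362880 - x^11/39916800 + x^13/6227020800)^2 - 2*x*(x - x^3/6 + x^5/120 - x^7/5040 + x^9/362880 - x^11/39916800 + x^13/6227020800)^4 + (32/45*x^5 - 16/945*x^7)*(x - x^3/6 + x^5/120 - x^7/5040 + x^9/362880 - x^11/39916800)^2 + (1 - x^2/2 + x^4/24 - x^6/720 + x^8/40320 - x^10/3628800 + x^12/479001600 - x^14/87178291200)*(14*x^2*(x - x^3/6 + x^5/120 - x^7/5040 + x^9/362880 - x^11/39916800) - 9*(x - x^3/6 + x^5/120 - x^7/5040 + x^9/362880 - x^11/39916800 + x^13/6227020800)^3) - (14*x^2*(x^13/6227020800) + 9*((x - x^3/6 + x^5/120 - x^7/5040 + x^9/362880 - x^11/39916800 + x^13/6227020800)^3 - (x - x^3/6 + x^5/120 - x^7/5040 + x^9/362880 - x^11/39916800)^3))) = x^13 * ((16/467775) + (507379/59439744000)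 * x^2 + (-183319/71327692800) * x^4 + (26582971/94152554496000) * x^6 + (-30999229/1647669703680000) * x^8 + (1159438627/1304954405314560000) * x^10 + (-2516616049/78297264318873600000) * x^12 + (949072567/1017864436145356800000) * x^14 + (-173585471/7772782966928179200000) * x^16 + (9240257359/20520147032690393088000000) * x^18 + (-3495107237/451443234719188647936000000) * x^20 + (667280813/5834035648678745604096000000) * x^22 + (-4973268437/3412910854477066178396160000000) * x^24 + (405731737/25353052061829634468085760000000) * x^26 + (-321165847/2129656373193689295319203840000000) * x^28 + (535853/443678411082018603191500800000000) * x^30 + (-7576313/937048804205223289940449689600000000) * x^32 + (3749/85186254927747571812768153600000000) * x^34 + (-1789/9638216271825153839387482521600000000) * x^36 + (149/269870055611104307502849510604800000000) * x^38 + (-19/21049864337666135985222261827174400000000) * x^40) := by ring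
  rw [hE]
  exact mul_pos (pow_pos hx0 13) (qpos x hx0.le hx1)

set_option maxHeartbeats 2000000 in
private lemma ppos (x : ℝ) (hx0 : 0 < x) (hxp : x < π/2) :
    (0:ℝ) < 2*x^3 - 7*x*sin x^2 - 2*x*sin x^4 + (32/45*x^5 - 16/945*x^7)*sin x^2 + cos x*(14*x^2*sin x - 9*sin x^3) := by
  have hpi := Real.pi_lt_d6
  have hpi3 := Real.pi_gt_three
  have hx1 : x ≤ (1571/1000:ℝ) := by linarith
  have hs0 : 0 < sin x := sin_pos_of_pos_of_lt_pi hx0 (by linarith)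
  have hc0 : 0 < cos x := Real.cos_pos_of_mem_Ioo ⟨by linarith, hxp⟩
  have hsx : sin x ≤ x := sin_ub_1 x hx0.le
  have hS : (x - x^3/6 + x^5/120 - x^7/5040 + x^9/362880 - x^11/39916800) ≤ sin x := sin_lb_11 x hx0.le
  have hSG : sin x ≤ (x - x^3/6 + x^5/120 - x^7/5040 + x^9/362880 - x^11/39916800 + x^13/6227020800) := sin_ub_13 x hx0.le
  have hC : (1 - x^2/2 + x^4/24 - x^6/720 + x^8/40320 - x^10/3628800 + x^12/479001600 - x^14/87178291200) ≤ cos x := cos_lb_14 x hx0.le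
  have hx2 : x^2 ≤ (2469/1000:ℝ) := by nlinarith
  have e1 : (0:ℝ) ≤ x*(6-x^2) := mul_nonneg hx0.le (by nlinarith)
  have e2 : (0:ℝ) ≤ x^5*(42-x^2) := mul_nonneg (pow_nonneg hx0.le 5) (by nlinarith)
  have e3 : (0:ℝ) ≤ x^9*(110-x^2) := mul_nonneg (pow_nonneg hx0.le 9) (by nlinarith)
  have hS0 : (0:ℝ) ≤ (x - x^3/6 + x^5/120 - x^7/5040 + x^9/362880 - x^11/39916800) := by nlinarith [e1, e2, e3]
  have c2 : (0:ℝ) ≤ x^4*(30-x^2) := mul_nonneg (pow_nonneg hx0.le 4) (by nlinarith)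
  have c3 : (0:ℝ) ≤ x^8*(90-x^2) := mul_nonneg (pow_nonneg hx0.le 8) (by nlinarith)
  have c4 : (0:ℝ) ≤ x^12*(182-x^2) := mul_nonneg (pow_nonneg hx0.le 12) (by nlinarith)
  have hC1 : (-1:ℝ) ≤ (1 - x^2/2 + x^4/24 - x^6/720 + x^8/40320 - x^10/3628800 + x^12/479001600 - x^14/87178291200) := by nlinarith [c2, c3, c4]
  have eb : (0:ℝ) ≤ x^5*(672-16*x^2) := mul_nonneg (pow_nonneg hx0.le 5) (by nlinarith)
  have hb : (0:ℝ) ≤ 32/45*x^5 - 16/945*x^7 := by nlinarith [eb]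
  have hsq : sin x^2 ≤ (x - x^3/6 + x^5/120 - x^7/5040 + x^9/362880 - x^11/39916800 + x^13/6227020800)^2 := pow_le_pow_left₀ hs0.le hSG 2
  have hsq4 : sin x^4 ≤ (x - x^3/6 + x^5/120 - x^7/5040 + x^9/362880 - x^11/39916800 + x^13/6227020800)^4 := pow_le_pow_left₀ hs0.le hSG 4
  have hSsq : (x - x^3/6 + x^5/120 - x^7/5040 + x^9/362880 - x^11/39916800)^2 ≤ sin x^2 := pow_le_pow_left₀ hS0 hS 2
  have hcube : sin x^3 ≤ (x - x^3/6 + x^5/120 - x^7/5040 + x^9/362880 - x^11/39916800 + x^13/6227020800)^3 := pow_le_pow_left₀ hs0.le hSG 3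
  have hScube : (x - x^3/6 + x^5/120 - x^7/5040 + x^9/362880 - x^11/39916800)^3 ≤ sin x^3 := pow_le_pow_left₀ hS0 hS 3
  have hssq : sin x^2 ≤ x^2 := pow_le_pow_left₀ hs0.le hsx 2
  have h9 : (9*sin x)*(sin x^2) ≤ (9*sin x)*(x^2) := mul_le_mul_of_nonneg_left hssq (by positivity)
  have hsx2 : (0:ℝ) ≤ sin x * x^2 := mul_nonneg hs0.le (sq_nonneg x)
  have hF0 : (0:ℝ) ≤ (14*x^2*sin x - 9*sin x^3) := by nlinarith [h9, hsx2]
  have m1 : 14*x^2*(x - x^3/6 + x^5/120 - x^7/5040 + x^9/362880 - x^11/39916800) ≤ 14*x^2*sin x := mul_le_mul_of_nonneg_left hS (by positivity)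
  have m2 : 14*x^2*sin x ≤ 14*x^2*(x - x^3/6 + x^5/120 - x^7/5040 + x^9/362880 - x^11/39916800 + x^13/6227020800) := mul_le_mul_of_nonneg_left hSG (by positivity)
  have hFlo : (14*x^2*(x - x^3/6 + x^5/120 - x^7/5040 + x^9/362880 - x^11/39916800) - 9*(x - x^3/6 + x^5/120 - x^7/5040 + x^9/362880 - x^11/39916800 + x^13/6227020800)^3) ≤ (14*x^2*sin x - 9*sin x^3) := by linarith [m1, hcube]
  have hFhi : (14*x^2*sin x - 9*sin x^3) ≤ (14*x^2*(x - x^3/6 + x^5/120 - x^7/5040 + x^9/362880 - x^11/39916800 + x^13/6227020800) - 9*(x - x^3/6 + x^5/120 - x^7/5040 + x^9/362880 - x^11/39916800)^3) := by linarith [m2, hScube]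
  have hA : (0:ℝ) ≤ (cos x - (1 - x^2/2 + x^4/24 - x^6/720 + x^8/40320 - x^10/3628800 + x^12/479001600 - x^14/87178291200))*(14*x^2*sin x - 9*sin x^3) := mul_nonneg (by linarith) hF0
  have hCd : (0:ℝ) ≤ ((1 - x^2/2 + x^4/24 - x^6/720 + x^8/40320 - x^10/3628800 + x^12/479001600 - x^14/87178291200)+1)*((14*x^2*sin x - 9*sin x^3) - (14*x^2*(x - x^3/6 + x^5/120 - x^7/5040 + x^9/362880 - x^11/39916800) - 9*(x - x^3/6 + x^5/120 - x^7/5040 + x^9/362880 - x^11/39916800 + x^13/6227020800)^3)) := mul_nonneg (by linarith) (by linarith)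
  have m7 : 7*x*sin x^2 ≤ 7*x*(x - x^3/6 + x^5/120 - x^7/5040 + x^9/362880 - x^11/39916800 + x^13/6227020800)^2 := mul_le_mul_of_nonneg_left hsq (by positivity)
  have m2x : 2*x*sin x^4 ≤ 2*x*(x - x^3/6 + x^5/120 - x^7/5040 + x^9/362880 - x^11/39916800 + x^13/6227020800)^4 := mul_le_mul_of_nonneg_left hsq4 (by positivity)
  have mb : (32/45*x^5 - 16/945*x^7)*(x - x^3/6 + x^5/120 - x^7/5040 + x^9/362880 - x^11/39916800)^2 ≤ (32/45*x^5 - 16/945*x^7)*sin x^2 := mul_le_mul_of_nonneg_left hSsq hb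
  have hid : cos x*(14*x^2*sin x - 9*sin x^3) = (1 - x^2/2 + x^4/24 - x^6/720 + x^8/40320 - x^10/3628800 + x^12/479001600 - x^14/87178291200)*(14*x^2*(x - x^3/6 + x^5/120 - x^7/5040 + x^9/362880 - x^11/39916800) - 9*(x - x^3/6 + x^5/120 - x^7/5040 + x^9/362880 - x^11/39916800 + x^13/6227020800)^3) + (1 - x^2/2 + x^4/24 - x^6/720 + x^8/40320 - x^10/3628800 + x^12/479001600 - x^14/87178291200)*((14*x^2*sin x - 9*sin x^3) - (14*x^2*(x - x^3/6 + x^5/120 - x^7/5040 + x^9/362880 - x^11/39916800) - 9*(x - x^3/6 + x^5/120 - x^7/5040 + x^9/362880 - x^11/39916800 + x^13/6227020800)^3)) + (cos x - (1 - x^2/2 + x^4/24 - x^6/720 + x^8/40320 - x^10/3628800 + x^12/479001600 - x^14/87178291200))*(14*x^2*sin x - 9*sin x^3) := by ring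
  have hL := lpos x hx0 hx1
  linarith [hA, hCd, m7, m2x, mb, hL, hid, hFlo, hFhi]

private lemma hderivN (x : ℝ) (hx0 : 0 < x) (hs : 0 < sin x) :
    HasDerivAt (fun y : ℝ => (sin y*cos y + y - 2*y^2*cos y/sin y - 8/45*y^5 + 8/945*y^7)/y^9)
      ((x*sin x^2*(cos x^2 - sin x^2) - 8*x*sin x^2 + 14*x^2*cos x*sin x + 2*x^3*(sin x^2 + cos x^2) - 9*sin x^3*cos x + (32/45*x^5 - 16/945*x^7)*sin x^2)/(x^10*sin x^2)) x := by
  have hsne : sin x ≠ 0 := hs.ne'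
  have hxne : x ≠ 0 := hx0.ne'
  have h1 : HasDerivAt (fun y : ℝ => sin y*cos y) (cos x*cos x + sin x*(-sin x)) x :=
    (Real.hasDerivAt_sin x).mul (Real.hasDerivAt_cos x)
  have h2 := (((hasDerivAt_pow 2 x).const_mul (2:ℝ)).mul (Real.hasDerivAt_cos x)).div
    (Real.hasDerivAt_sin x) hsne
  have hnum := (((h1.add (hasDerivAt_id x)).sub h2).sub
    ((hasDerivAt_pow 5 x).const_mul (8/45:ℝ))).add ((hasDerivAt_pow 7 x).const_mul (8/945:ℝ))
  have h := hnum.div (hasDerivAt_pow 9 x) (pow_ne_zero 9 hxne)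
  refine h.congr_deriv ?_
  simp only [Pi.add_apply, Pi.sub_apply, Pi.mul_apply, Pi.div_apply, id]
  push_cast
  field_simp
  ring

private lemma f_eq (x : ℝ) (hx0 : 0 < x) (hs : 0 < sin x) (hc : 0 < cos x) :
    (((sin x / x) ^ 2 + tan x / x - 2) / (x ^ 3 * tan x) - (8 / 45 - (8 / 945) * x ^ 2)) / x ^ 4
      = (sin x*cos x + x - 2*x^2*cos x/sin x - 8/45*x^5 + 8/945*x^7)/x^9 := by
  rw [Real.tan_eq_sin_div_cos]
  field_simp
  ring

theorem stmt_16 :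
    StrictMonoOn (fun x : ℝ =>
      (((sin x / x) ^ 2 + tan x / x - 2) / (x ^ 3 * tan x) -
        (8 / 45 - (8 / 945) * x ^ 2)) / x ^ 4)
      (Set.Ioo 0 (π / 2)) := by
  have hpi3 := Real.pi_gt_three
  have key : StrictMonoOn
      (fun y : ℝ => (sin y*cos y + y - 2*y^2*cos y/sin y - 8/45*y^5 + 8/945*y^7)/y^9)
      (Set.Ioo 0 (π/2)) := by
    apply strictMonoOn_of_deriv_pos (convex_Ioo 0 (π/2))
    · intro y hy
      have hs : 0 < sin y := sin_pos_of_pos_of_lt_pi hy.1 (by linarith [hy.2])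
      exact (hderivN y hy.1 hs).continuousAt.continuousWithinAt
    · intro y hy
      rw [interior_Ioo] at hy
      have hy0 : 0 < y := hy.1
      have hs : 0 < sin y := sin_pos_of_pos_of_lt_pi hy0 (by linarith [hy.2])
      rw [(hderivN y hy0 hs).deriv]
      apply div_pos
      · have hp := ppos y hy0 hy.2
        have hpy := Real.sin_sq_add_cos_sq y
        have hEq : (y*sin y^2*(cos y^2 - sin y^2) - 8*y*sin y^2 + 14*y^2*cos y*sin y + 2*y^3*(sin y^2 + cos y^2) - 9*sin y^3*cos y + (32/45*y^5 - 16/945*y^7)*sin y^2) =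
            2*y^3 - 7*y*sin y^2 - 2*y*sin y^4 + (32/45*y^5 - 16/945*y^7)*sin y^2 + cos y*(14*y^2*sin y - 9*sin y^3) := by
          linear_combination (y*sin y^2 + 2*y^3) * hpy
        rw [hEq]
        exact hp
      · positivity
  intro a ha b hb hab
  have h := key ha hb hab
  have hsa : 0 < sin a := sin_pos_of_pos_of_lt_pi ha.1 (by linarith [ha.2])
  have hca : 0 < cos a := Real.cos_pos_of_mem_Ioo ⟨by linarith [ha.1], ha.2⟩
  have hsb : 0 < sin b := sin_pos_of_pos_of_lt_pi hb.1 (by linarith [hb.2])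
  have hcb : 0 < cos b := Real.cos_pos_of_mem_Ioo ⟨by linarith [hb.1], hb.2⟩
  have e1 := f_eq a ha.1 hsa hca
  have e2 := f_eq b hb.1 hsb hcb
  show (((sin a / a) ^ 2 + tan a / a - 2) / (a ^ 3 * tan a) - (8 / 45 - (8 / 945) * a ^ 2)) / a ^ 4
    < (((sin b / b) ^ 2 + tan b / b - 2) / (b ^ 3 * tan b) - (8 / 45 - (8 / 945) * b ^ 2)) / b ^ 4
  rw [e1, e2]
  exact h
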